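/- Let α, β ∈ ℂ with |α|² + |β|² = 1 and ψ = (α, β) ∈ ℂ²; let X = ![![0,1],![1,0]], Z = ![![1,0],![0,−1]] be the Pauli matrices and qZ = |⟨ψ, Zψ⟩|², qX = |⟨ψ, Xψ⟩|², qXZ = |⟨ψ, XZψ⟩|². Let p : {0,1} × {0,1} → ℝ satisfy p(0,s) + p(1,s) = 1 for each s, set P = p(0,0) − p(0,1), and let ρ_B = (1/4) Σ_{y₁,y₂,s₁,s₂ ∈ {0,1}} p(y₁,s₁)·p(y₂,s₂) · (X^{y₁⊕s₁} Z^{y₂⊕s₂} ψ)(X^{y₁⊕s₁} Z^{y₂⊕s₂} ψ)†. For F_W ∈ [0,1] define ρ = F_W · ρ_B + (1 − F_W) · (1/2)·I₂, where I₂ is the 2×2 identity matrix. Then the teleportation fidelity with the imperfect (Werner) entanglement resource satisfies ⟨ψ, ρ ψ⟩ = 1/2 + F_W · P·(qX + qZ + qXZ·P)/2. -/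

import Mathlib

open Matrix

/-- Teleportation fidelity with an imperfect (Werner) entanglement resource:
with `ρ = F_W ρ_B + (1 − F_W)(1/2)I₂`, the fidelity is
`⟨ψ, ρ ψ⟩ = 1/2 + F_W · P(qX + qZ + qXZ·P)/2`. -/
theorem teleportation_fidelity_werner (α β : ℂ)
    (hnorm : ‖α‖ ^ 2 + ‖β‖ ^ 2 = 1)
    (p : Fin 2 → Fin 2 → ℝ)
    (hp : ∀ s : Fin 2, p 0 s + p 1 s = 1)
    (FW : ℝ) (hFW : FW ∈ Set.Icc (0 : ℝ) 1) :
    let ψ : Fin 2 → ℂ := ![α, β]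
    let X : Matrix (Fin 2) (Fin 2) ℂ := !![0, 1; 1, 0]
    let Z : Matrix (Fin 2) (Fin 2) ℂ := !![1, 0; 0, -1]
    let qZ : ℝ := ‖(star ψ ⬝ᵥ Z.mulVec ψ)‖ ^ 2
    let qX : ℝ := ‖(star ψ ⬝ᵥ X.mulVec ψ)‖ ^ 2
    let qXZ : ℝ := ‖(star ψ ⬝ᵥ (X * Z).mulVec ψ)‖ ^ 2
    let P : ℝ := p 0 0 - p 0 1
    let ρB : Matrix (Fin 2) (Fin 2) ℂ :=
      (1 / 4 : ℂ) • ∑ y₁ : Fin 2, ∑ y₂ : Fin 2, ∑ s₁ : Fin 2, ∑ s₂ : Fin 2,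
        ((p y₁ s₁ * p y₂ s₂ : ℝ) : ℂ) •
          vecMulVec
            ((X ^ ((y₁ + s₁ : Fin 2) : ℕ) * Z ^ ((y₂ + s₂ : Fin 2) : ℕ)).mulVec ψ)
            (star ((X ^ ((y₁ + s₁ : Fin 2) : ℕ) * Z ^ ((y₂ + s₂ : Fin 2) : ℕ)).mulVec ψ))
    let ρ : Matrix (Fin 2) (Fin 2) ℂ :=
      ((FW : ℝ) : ℂ) • ρB + (((1 - FW : ℝ)) : ℂ) • ((1 / 2 : ℂ) • (1 : Matrix (Fin 2) (Fin 2) ℂ))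
    star ψ ⬝ᵥ ρ.mulVec ψ
      = ((1 / 2 + FW * (P * (qX + qZ + qXZ * P)) / 2 : ℝ) : ℂ) := by
  intro ψ X Z qZ qX qXZ P ρB ρ
  have e1 : α * starRingEnd ℂ α + β * starRingEnd ℂ β = 1 := by
    rw [Complex.mul_conj, Complex.mul_conj, ← Complex.ofReal_add,
      Complex.normSq_eq_norm_sq, Complex.normSq_eq_norm_sq, hnorm, Complex.ofReal_one]
  have hA : ((p 1 0 : ℝ) : ℂ) = 1 - ((p 0 0 : ℝ) : ℂ) := by
    have h : (p 1 0 : ℝ) = 1 - p 0 0 := by linarith [hp 0]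
    rw [h]; push_cast; ring
  have hB : ((p 1 1 : ℝ) : ℂ) = 1 - ((p 0 1 : ℝ) : ℂ) := by
    have h : (p 1 1 : ℝ) = 1 - p 0 1 := by linarith [hp 1]
    rw [h]; push_cast; ring
  have hqZ : ((qZ : ℝ) : ℂ)
      = (starRingEnd ℂ α * α - starRingEnd ℂ β * β)
        * (α * starRingEnd ℂ α - β * starRingEnd ℂ β) := by
    show ((‖(star ψ ⬝ᵥ Z.mulVec ψ)‖ ^ 2 : ℝ) : ℂ) = _
    rw [Complex.sq_norm, ← Complex.mul_conj]
    simp [ψ, Z, dotProduct, mulVec, Fin.sum_univ_two, map_add, _root_.map_mul, map_sub]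
    try ring
  have hqX : ((qX : ℝ) : ℂ)
      = (starRingEnd ℂ α * β + starRingEnd ℂ β * α)
        * (α * starRingEnd ℂ β + β * starRingEnd ℂ α) := by
    show ((‖(star ψ ⬝ᵥ X.mulVec ψ)‖ ^ 2 : ℝ) : ℂ) = _
    rw [Complex.sq_norm, ← Complex.mul_conj]
    simp [ψ, X, dotProduct, mulVec, Fin.sum_univ_two, map_add, _root_.map_mul]
    try ring
  have hqXZ : ((qXZ : ℝ) : ℂ)
      = (starRingEnd ℂ β * α - starRingEnd ℂ α * β)
        * (β * starRingEnd ℂ α - α * starRingEnd ℂ β) := by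
    show ((‖(star ψ ⬝ᵥ (X * Z).mulVec ψ)‖ ^ 2 : ℝ) : ℂ) = _
    rw [Complex.sq_norm, ← Complex.mul_conj]
    simp [ψ, X, Z, dotProduct, mulVec, Matrix.mul_apply, Fin.sum_univ_two, map_add,
      _root_.map_mul, map_sub, map_neg]
    try ring
  have hPc : ((P : ℝ) : ℂ) = ((p 0 0 : ℝ) : ℂ) - ((p 0 1 : ℝ) : ℂ) := by
    show ((p 0 0 - p 0 1 : ℝ) : ℂ) = _
    push_cast; ring
  simp only [ψ, X, Z, ρ, ρB]
  simp [Fin.sum_univ_two, dotProduct, mulVec, vecMulVec_apply, Matrix.add_apply,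
    Matrix.smul_apply, Matrix.sum_apply, Matrix.one_apply, Matrix.mul_apply,
    Fin.isValue, pow_zero, pow_one, -cons_vecMulVec]
  push_cast
  rw [hA, hB, hqZ, hqX, hqXZ, hPc]
  linear_combination (((FW : ℂ) * (α * starRingEnd ℂ α + β * starRingEnd ℂ β) + 1) / 2) * e1
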